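/- arXiv:2508.03157 — 2 statements merged into one kernel-verified Lean document; each statement's English description precedes it below -/
import Mathlib

section
/- Suppose B is an N²×N² matrix over a field K containing elements ξ_α, ξ_β, ξ_γ, such that the scattering matrices R_{βα} = −(I⊗I − ξ_α B)⁻¹(I⊗I − ξ_β B) (and similarly R_{γα}, R_{γβ}) are well defined and satisfy the Yang–Baxter equation (R_{γβ}⊗I)(I⊗R_{γα})(R_{βα}⊗I) = (I⊗R_{βα})(R_{γα}⊗I)(I⊗R_{γβ}). Then for any scalars a, b with a + b = 1 and 1−aξ_α, 1−aξ_β, 1−aξ_γ nonzero, the scattering matrices built from B' = a(I⊗I) + bB (with the same spectral parameters) also satisfy the Yang–Baxter equation, provided one assumes that R built from B satisfies Yang–Baxter for all admissible spectral parameters (in particular at the reparameterized values η_γ = bξ_γ/(1−aξ_γ)). -/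
open Matrix

noncomputable section

variable {K : Type*} [Field K] {N : ℕ}

/-- The scattering matrix `R_{βα} = −(I⊗I − ξ_α B)⁻¹(I⊗I − ξ_β B)` built from an
`N²×N²` interaction matrix `B` (indexed by pairs); here `1` is the identity `I⊗I`. -/
def Rm (B : Matrix (Fin N × Fin N) (Fin N × Fin N) K) (ξβ ξα : K) :
    Matrix (Fin N × Fin N) (Fin N × Fin N) K :=
  -((1 - ξα • B)⁻¹ * (1 - ξβ • B))

/-- `A ⊗ I` acting on the first two of three tensor factors. -/
def legL (A : Matrix (Fin N × Fin N) (Fin N × Fin N) K) :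
    Matrix (Fin N × Fin N × Fin N) (Fin N × Fin N × Fin N) K :=
  Matrix.of fun p q => A (p.1, p.2.1) (q.1, q.2.1) * (if p.2.2 = q.2.2 then 1 else 0)

/-- `I ⊗ A` acting on the last two of three tensor factors. -/
def legR (A : Matrix (Fin N × Fin N) (Fin N × Fin N) K) :
    Matrix (Fin N × Fin N × Fin N) (Fin N × Fin N × Fin N) K :=
  Matrix.of fun p q => (if p.1 = q.1 then 1 else 0) * A (p.2.1, p.2.2) (q.2.1, q.2.2)

/-- The Yang–Baxter equation for the scattering matrices built from `B`
at spectral parameters `ξ_α, ξ_β, ξ_γ`. -/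
def YBE (B : Matrix (Fin N × Fin N) (Fin N × Fin N) K) (ξα ξβ ξγ : K) : Prop :=
  legL (Rm B ξγ ξβ) * legR (Rm B ξγ ξα) * legL (Rm B ξβ ξα) =
    legR (Rm B ξβ ξα) * legL (Rm B ξγ ξα) * legR (Rm B ξγ ξβ)

-- auxiliary: inverse of a nonzero scalar multiple
lemma smul_inv_field {n : Type*} [Fintype n] [DecidableEq n]
    (k : K) (hk : k ≠ 0) (A : Matrix n n K) : (k • A)⁻¹ = k⁻¹ • A⁻¹ := by
  by_cases h : IsUnit A.det
  · have := Matrix.inv_smul' (Units.mk0 k hk) h (A := A)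
    simpa [Units.smul_def] using this
  · rw [Matrix.nonsing_inv_apply_not_isUnit _ h,
      Matrix.nonsing_inv_apply_not_isUnit, smul_zero]
    rw [Matrix.det_smul]
    simpa [isUnit_iff_ne_zero, hk] using h

lemma one_sub_smul_comb (a b ξ : K) (hξ : 1 - a * ξ ≠ 0)
    (B : Matrix (Fin N × Fin N) (Fin N × Fin N) K) :
    (1 : Matrix (Fin N × Fin N) (Fin N × Fin N) K) - ξ • (a • 1 + b • B) =
      (1 - a * ξ) • (1 - (b * ξ / (1 - a * ξ)) • B) := by
  have h : (1 - a * ξ) * (b * ξ / (1 - a * ξ)) = b * ξ := by field_simp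
  rw [smul_sub, smul_smul, h, smul_add, smul_smul, smul_smul, sub_smul, one_smul]
  ring_nf
  abel

lemma Rm_comb (a b ξα ξβ : K) (hα : 1 - a * ξα ≠ 0) (hβ : 1 - a * ξβ ≠ 0)
    (B : Matrix (Fin N × Fin N) (Fin N × Fin N) K) :
    Rm (a • (1 : Matrix (Fin N × Fin N) (Fin N × Fin N) K) + b • B) ξβ ξα =
      ((1 - a * ξβ) / (1 - a * ξα)) •
        Rm B (b * ξβ / (1 - a * ξβ)) (b * ξα / (1 - a * ξα)) := by
  rw [Rm, Rm, one_sub_smul_comb a b ξα hα B, one_sub_smul_comb a b ξβ hβ B,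
    smul_inv_field _ hα, smul_mul_assoc, mul_smul_comm, smul_smul, ← smul_neg]
  congr 1
  field_simp

lemma legL_smul (c : K) (A : Matrix (Fin N × Fin N) (Fin N × Fin N) K) :
    legL (c • A) = c • legL A := by
  ext p q
  simp [legL, mul_assoc]

lemma legR_smul (c : K) (A : Matrix (Fin N × Fin N) (Fin N × Fin N) K) :
    legR (c • A) = c • legR A := by
  ext p q
  simp [legR, Matrix.smul_apply, mul_left_comm]

/-- If the scattering matrices built from `B` satisfy the Yang–Baxter equation for all
spectral parameters (in particular at the reparameterized values `η_γ = bξ_γ/(1−aξ_γ)`),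
then for any scalars `a, b` with `a + b = 1` and `1 − aξ_α, 1 − aξ_β, 1 − aξ_γ` nonzero,
the scattering matrices built from `B' = a(I⊗I) + bB` also satisfy the
Yang–Baxter equation with the same spectral parameters `ξ_α, ξ_β, ξ_γ`. -/
theorem ybe_convex_combination (B : Matrix (Fin N × Fin N) (Fin N × Fin N) K)
    (hYB : ∀ u v w : K, YBE B u v w)
    (a b ξα ξβ ξγ : K) (hab : a + b = 1)
    (hα : 1 - a * ξα ≠ 0) (hβ : 1 - a * ξβ ≠ 0) (hγ : 1 - a * ξγ ≠ 0) :
    YBE (a • (1 : Matrix (Fin N × Fin N) (Fin N × Fin N) K) + b • B) ξα ξβ ξγ := by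
  unfold YBE
  rw [Rm_comb a b ξα ξβ hα hβ, Rm_comb a b ξα ξγ hα hγ, Rm_comb a b ξβ ξγ hβ hγ,
    legL_smul, legR_smul, legL_smul, legR_smul, legL_smul, legR_smul]
  simp only [smul_mul_assoc, mul_smul_comm, smul_smul]
  have key := hYB (b * ξα / (1 - a * ξα)) (b * ξβ / (1 - a * ξβ)) (b * ξγ / (1 - a * ξγ))
  unfold YBE at key
  rw [key]
  congr 1
  field_simp

end
end

section
/- With B(λ,λ′) the 9×9 matrix of the two-parameter 3-species infection model (B·e_{ii}=e_{ii}; B·e_{ij}=λe_{ij}+(1−λ)e_{jj} for i<j; B·e_{ij}=λ′e_{ij}+(1−λ′)e_{ii} for i>j), and R_{βα} = −(I₉ − ξ_α B)⁻¹(I₉ − ξ_β B), the entries of R_{βα} are given explicitly by: R_{ν₁ν₂,ν₁ν₂} = −(1−ξ_β)/(1−ξ_α) if ν₁=ν₂; R_{ν₁ν₂,ν₁ν₂} = −(1−λξ_β)/(1−λξ_α) if ν₁<ν₂; R_{ν₂ν₂,ν₁ν₂} = (1−λ)(ξ_β−ξ_α)/((1−ξ_α)(1−λξ_α)) if ν₁<ν₂;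 R_{ν₁ν₁,ν₁ν₂} = (1−λ′)(ξ_β−ξ_α)/((1−ξ_α)(1−λ′ξ_α)) if ν₁>ν₂; R_{ν₁ν₂,ν₁ν₂} = −(1−λ′ξ_β)/(1−λ′ξ_α) if ν₁>ν₂; and all other entries are 0. -/
open Matrix

noncomputable section

/-- The field of rational functions in `ξ_α, ξ_β, λ, λ′`. -/
abbrev KK : Type := FractionRing (MvPolynomial (Fin 4) ℚ)

def xi (i : Fin 4) : KK := algebraMap (MvPolynomial (Fin 4) ℚ) KK (MvPolynomial.X i)

/-- `ξ_α`. -/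
def ξα : KK := xi 0
/-- `ξ_β`. -/
def ξβ : KK := xi 1
/-- `λ`. -/
def lam : KK := xi 2
/-- `λ′`. -/
def lam' : KK := xi 3

/-- The 9×9 matrix `B(λ,λ′)` of the two-parameter 3-species infection model:
`B·e_{ii} = e_{ii}`; for `i<j`, `B·e_{ij} = λ e_{ij} + (1−λ) e_{jj}`;
for `i>j`, `B·e_{ij} = λ′ e_{ij} + (1−λ′) e_{ii}`. -/
def Bmat : Matrix (Fin 3 × Fin 3) (Fin 3 × Fin 3) KK :=
  Matrix.of fun p q =>
    if q.1 = q.2 then (if p = q then 1 else 0)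
    else if q.1 < q.2 then
      (if p = q then lam else if p = (q.2, q.2) then 1 - lam else 0)
    else
      (if p = q then lam' else if p = (q.1, q.1) then 1 - lam' else 0)

/-- The scattering matrix `R_{βα} = −(I₉ − ξ_α B)⁻¹ (I₉ − ξ_β B)`. -/
def R : Matrix (Fin 3 × Fin 3) (Fin 3 × Fin 3) KK :=
  -((1 - ξα • Bmat)⁻¹ * (1 - ξβ • Bmat))

lemma poly_ne (p : MvPolynomial (Fin 4) ℚ)
    (h : MvPolynomial.eval (fun _ => 0) p ≠ 0) :
    algebraMap (MvPolynomial (Fin 4) ℚ) KK p ≠ 0 := by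
  intro h0
  have hp : p = 0 := by
    apply IsFractionRing.injective (MvPolynomial (Fin 4) ℚ) KK
    rw [h0, map_zero]
  exact h (by simp [hp])

lemma h1 : (1 : KK) - ξα ≠ 0 := by
  have := poly_ne (1 - MvPolynomial.X 0) (by simp)
  simpa [ξα, xi, map_sub, _root_.map_one] using this

lemma h2 : (1 : KK) - lam * ξα ≠ 0 := by
  have := poly_ne (1 - MvPolynomial.X 2 * MvPolynomial.X 0) (by simp)
  simpa [ξα, lam, xi, map_sub, _root_.map_one, _root_.map_mul] using this

lemma h3 : (1 : KK) - lam' * ξα ≠ 0 := by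
  have := poly_ne (1 - MvPolynomial.X 3 * MvPolynomial.X 0) (by simp)
  simpa [ξα, lam', xi, map_sub, _root_.map_one, _root_.map_mul] using this

lemma h2' : (1 : KK) - ξα * lam ≠ 0 := by rw [mul_comm]; exact h2

lemma h3' : (1 : KK) - ξα * lam' ≠ 0 := by rw [mul_comm]; exact h3

/-- Explicit inverse of `1 - ξα • Bmat`. -/
def Nmat : Matrix (Fin 3 × Fin 3) (Fin 3 × Fin 3) KK :=
  Matrix.of fun p q =>
    if q.1 = q.2 then (if p = q then (1 - ξα)⁻¹ else 0)
    else if q.1 < q.2 then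
      (if p = q then (1 - lam * ξα)⁻¹
       else if p = (q.2, q.2) then ξα * (1 - lam) / ((1 - ξα) * (1 - lam * ξα)) else 0)
    else
      (if p = q then (1 - lam' * ξα)⁻¹
       else if p = (q.1, q.1) then ξα * (1 - lam') / ((1 - ξα) * (1 - lam' * ξα)) else 0)

lemma Bmat_apply (p q : Fin 3 × Fin 3) : Bmat p q =
    (if q.1 = q.2 then (if p = q then 1 else 0)
    else if q.1 < q.2 then
      (if p = q then lam else if p = (q.2, q.2) then 1 - lam else 0)
    else
      (if p = q then lam' else if p = (q.1, q.1) then 1 - lam' else 0)) := rfl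

lemma Nmat_apply (p q : Fin 3 × Fin 3) : Nmat p q =
    (if q.1 = q.2 then (if p = q then (1 - ξα)⁻¹ else 0)
    else if q.1 < q.2 then
      (if p = q then (1 - lam * ξα)⁻¹
       else if p = (q.2, q.2) then ξα * (1 - lam) / ((1 - ξα) * (1 - lam * ξα)) else 0)
    else
      (if p = q then (1 - lam' * ξα)⁻¹
       else if p = (q.1, q.1) then ξα * (1 - lam') / ((1 - ξα) * (1 - lam' * ξα)) else 0)) := rfl

lemma sum_expand (f : Fin 3 × Fin 3 → KK) :
    ∑ k, f k = f (0,0) + f (0,1) + f (0,2) + f (1,0) + f (1,1) + f (1,2)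
      + f (2,0) + f (2,1) + f (2,2) := by
  rw [Fintype.sum_prod_type]
  simp [Fin.sum_univ_succ]
  ring

set_option maxHeartbeats 4000000 in
lemma hAN : (1 - ξα • Bmat) * Nmat = 1 := by
  ext ⟨p1, p2⟩ ⟨q1, q2⟩
  rw [Matrix.mul_apply, sum_expand]
  fin_cases p1 <;> fin_cases p2 <;> fin_cases q1 <;> fin_cases q2 <;>
    · simp (config := { decide := true }) only [Bmat_apply, Nmat_apply,
        Matrix.sub_apply, Matrix.smul_apply, Matrix.one_apply, smul_eq_mul,
        if_true, if_false, reduceIte]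
      try field_simp [h1, h2, h3]
      try ring_nf
      try (field_simp [h1, h2', h3']; ring)



set_option maxHeartbeats 4000000 in
/-- The explicit entries of `R_{βα}`: writing `R_{π₁π₂,ν₁ν₂}` for the entry in row
`(π₁,π₂)` and column `(ν₁,ν₂)`,
`R_{ν₁ν₂,ν₁ν₂} = −(1−ξ_β)/(1−ξ_α)` if `ν₁=ν₂`;
`R_{ν₁ν₂,ν₁ν₂} = −(1−λξ_β)/(1−λξ_α)` if `ν₁<ν₂`;
`R_{ν₂ν₂,ν₁ν₂} = (1−λ)(ξ_β−ξ_α)/((1−ξ_α)(1−λξ_α))` if `ν₁<ν₂`;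
`R_{ν₁ν₁,ν₁ν₂} = (1−λ′)(ξ_β−ξ_α)/((1−ξ_α)(1−λ′ξ_α))` if `ν₁>ν₂`;
`R_{ν₁ν₂,ν₁ν₂} = −(1−λ′ξ_β)/(1−λ′ξ_α)` if `ν₁>ν₂`; all other entries are `0`. -/

theorem R_entries (p q : Fin 3 × Fin 3) :
    R p q =
      if p = q then
        (if q.1 = q.2 then -((1 - ξβ) / (1 - ξα))
          else if q.1 < q.2 then -((1 - lam * ξβ) / (1 - lam * ξα))
          else -((1 - lam' * ξβ) / (1 - lam' * ξα)))
      else if q.1 < q.2 ∧ p = (q.2, q.2) then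
        (1 - lam) * (ξβ - ξα) / ((1 - ξα) * (1 - lam * ξα))
      else if q.2 < q.1 ∧ p = (q.1, q.1) then
        (1 - lam') * (ξβ - ξα) / ((1 - ξα) * (1 - lam' * ξα))
      else 0 := by
  have hinv : (1 - ξα • Bmat)⁻¹ = Nmat := Matrix.inv_eq_right_inv hAN
  obtain ⟨p1, p2⟩ := p
  obtain ⟨q1, q2⟩ := q
  simp only [R, hinv, Matrix.neg_apply]
  rw [Matrix.mul_apply, sum_expand]
  fin_cases p1 <;> fin_cases p2 <;> fin_cases q1 <;> fin_cases q2 <;>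
    · simp (config := { decide := true }) only [Bmat_apply, Nmat_apply,
        Matrix.sub_apply, Matrix.smul_apply, Matrix.one_apply, smul_eq_mul,
        if_true, if_false, reduceIte]
      try field_simp [h1, h2, h3]
      try ring_nf
      try (field_simp [h1, h2', h3']; ring)


end
end
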